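/- Let C be a closed subset of the circle 𝕋 = ℝ/ℤ and let (q_n) be a sequence of positive integers such that ‖q_n α‖ → 0 for every α ∈ C, where ‖·‖ denotes the distance to 0 in ℝ/ℤ. Let T : C × 𝕋 → C × 𝕋 be the homeomorphism T(x,y) = (x, x+y). Then for every T-invariant Borel probability measure ν on C × 𝕋 (i.e., ν(T^{-1}E) = ν(E) for all Borel sets E) and every f ∈ L²(C × 𝕋, ν), one has ∫ |f(T^{q_n} z) − f(z)|² dν(z) → 0 as n → ∞; that is, (q_n) is a rigidity time for the system (C × 𝕋, ν, T). -/

import Mathlib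

open Filter MeasureTheory
open scoped ENNReal NNReal

set_option synthInstance.maxHeartbeats 1000000
set_option maxHeartbeats 1000000

theorem rigidity_of_skew_rotation_systems
    (C : Set (AddCircle (1 : ℝ))) (hC : IsClosed C)
    (q : ℕ → ℕ) (hqpos : ∀ n, 0 < q n)
    (hrig : ∀ α ∈ C, Filter.Tendsto (fun n => ‖(q n : ℤ) • α‖) Filter.atTop (nhds 0))
    (T : C × AddCircle (1 : ℝ) → C × AddCircle (1 : ℝ))
    (hT : ∀ z : C × AddCircle (1 : ℝ), T z = (z.1, (z.1 : AddCircle (1 : ℝ)) + z.2))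
    (ν : MeasureTheory.Measure (C × AddCircle (1 : ℝ)))
    [MeasureTheory.IsProbabilityMeasure ν]
    (hinv : ∀ E : Set (C × AddCircle (1 : ℝ)), MeasurableSet E → ν (T ⁻¹' E) = ν E)
    (f : C × AddCircle (1 : ℝ) → ℂ) (hf : MeasureTheory.MemLp f 2 ν) :
    Filter.Tendsto (fun n => ∫ z, ‖f (T^[q n] z) - f z‖ ^ 2 ∂ν)
      Filter.atTop (nhds 0) := by
  classical
  have hTeq : T = fun z : C × AddCircle (1 : ℝ) => (z.1, (z.1 : AddCircle (1 : ℝ)) + z.2) :=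
    funext hT
  have hTcont : Continuous T := by
    rw [hTeq]
    exact continuous_fst.prodMk ((continuous_subtype_val.comp continuous_fst).add continuous_snd)
  have hTmeas : Measurable T := hTcont.measurable
  have hmp : MeasurePreserving T ν ν :=
    ⟨hTmeas, Measure.ext fun E hE => by
      rw [Measure.map_apply hTmeas hE, hinv E hE]⟩
  have hmpk : ∀ k : ℕ, MeasurePreserving (T^[k]) ν ν := fun k => hmp.iterate k
  have hScont : ∀ k : ℕ, Continuous (T^[k]) := fun k => hTcont.iterate k
  -- iterate formula
  have hiter : ∀ (k : ℕ) (z : C × AddCircle (1 : ℝ)),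
      T^[k] z = (z.1, k • (z.1 : AddCircle (1 : ℝ)) + z.2) := by
    intro k
    induction k with
    | zero => intro z; simp
    | succ k ih =>
      intro z
      rw [Function.iterate_succ_apply', ih z, hT]
      simp only
      congr 1
      rw [succ_nsmul]
      abel
  -- pointwise convergence of the iterates
  have hpt : ∀ z : C × AddCircle (1 : ℝ), Tendsto (fun n => T^[q n] z) atTop (nhds z) := by
    intro z
    have h1 : Tendsto (fun n => (q n) • (z.1 : AddCircle (1 : ℝ))) atTop (nhds 0) := by
      rw [tendsto_zero_iff_norm_tendsto_zero]
      simpa [natCast_zsmul] using hrig (z.1 : AddCircle (1 : ℝ)) z.1.2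
    have h2 : Tendsto (fun n => (q n) • (z.1 : AddCircle (1 : ℝ)) + z.2) atTop (nhds z.2) := by
      simpa using h1.add (tendsto_const_nhds (x := z.2))
    have h3 : Tendsto (fun n => ((z.1 : C), (q n) • (z.1 : AddCircle (1 : ℝ)) + z.2)) atTop
        (nhds (z.1, z.2)) := tendsto_const_nhds.prodMk_nhds h2
    simpa [← hiter] using h3
  -- rigidity for bounded continuous functions
  have hmid : ∀ g : BoundedContinuousFunction (C × AddCircle (1 : ℝ)) ℂ,
      Tendsto (fun n => eLpNorm (fun z => g (T^[q n] z) - g z) 2 ν) atTop (nhds 0) := by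
    intro g
    have hcont : ∀ n, Continuous fun z => g (T^[q n] z) - g z := fun n =>
      (g.continuous.comp (hScont (q n))).sub g.continuous
    have hL : Tendsto (fun n => ∫⁻ z, (‖g (T^[q n] z) - g z‖₊ : ℝ≥0∞) ^ (2 : ℕ) ∂ν) atTop
        (nhds 0) := by
      have h0 : (0 : ℝ≥0∞) = ∫⁻ _z : C × AddCircle (1 : ℝ), 0 ∂ν := by simp
      rw [h0]
      refine tendsto_lintegral_of_dominated_convergence
        (fun _ => ((2 * ‖g‖₊ : ℝ≥0) : ℝ≥0∞) ^ (2 : ℕ)) (fun n => ?_) (fun n => ?_) ?_ ?_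
      · exact (((hcont n).nnnorm.measurable).coe_nnreal_ennreal).pow_const _
      · refine Eventually.of_forall fun z => ?_
        have h1 : ‖g (T^[q n] z) - g z‖₊ ≤ 2 * ‖g‖₊ := by
          refine (nnnorm_sub_le _ _).trans ?_
          rw [two_mul]
          exact add_le_add (g.nnnorm_coe_le_nnnorm _) (g.nnnorm_coe_le_nnnorm _)
        exact pow_le_pow_left₀ (by positivity) (by exact_mod_cast h1) 2
      · rw [lintegral_const, measure_univ, mul_one, ← ENNReal.coe_pow]
        exact ENNReal.coe_ne_top
      · refine Eventually.of_forall fun z => ?_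
        have h1 : Tendsto (fun n => g (T^[q n] z) - g z) atTop (nhds 0) := by
          simpa using ((g.continuous.tendsto z).comp (hpt z)).sub
            (tendsto_const_nhds (x := g z))
        have h2 : Tendsto (fun n => (‖g (T^[q n] z) - g z‖₊ : ℝ≥0∞)) atTop (nhds 0) := by
          rw [← ENNReal.coe_zero]
          exact ENNReal.tendsto_coe.mpr (by simpa using h1.nnnorm)
        simpa using ENNReal.Tendsto.pow h2 (n := 2)
    have heq : ∀ n, eLpNorm (fun z => g (T^[q n] z) - g z) 2 ν =
        (∫⁻ z, (‖g (T^[q n] z) - g z‖₊ : ℝ≥0∞) ^ (2 : ℕ) ∂ν) ^ (1 / (2 : ℝ)) := by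
      intro n
      rw [eLpNorm_eq_lintegral_rpow_enorm_toReal two_ne_zero ENNReal.ofNat_ne_top]
      simp only [ENNReal.toReal_ofNat, ← ENNReal.rpow_natCast, Nat.cast_ofNat, enorm_eq_nnnorm]
    have := ((ENNReal.continuous_rpow_const (y := 1 / (2 : ℝ))).tendsto 0).comp hL
    simp only [Function.comp_def] at this
    rw [show ((0 : ℝ≥0∞) ^ (1 / (2:ℝ))) = 0 by
      rw [ENNReal.zero_rpow_of_pos (by norm_num)]] at this
    simpa only [heq] using this
  -- Memℒp of the differences
  have hFmem : ∀ n, MemLp (fun z => f (T^[q n] z) - f z) 2 ν := fun n =>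
    (hf.comp_measurePreserving (hmpk (q n))).sub hf
  -- main convergence in L² seminorm
  have hmain : Tendsto (fun n => eLpNorm (fun z => f (T^[q n] z) - f z) 2 ν) atTop (nhds 0) := by
    rw [ENNReal.tendsto_nhds_zero]
    intro ε hε
    have hε3 : (ε / 3 : ℝ≥0∞) ≠ 0 := by
      simp [ENNReal.div_eq_zero_iff, hε.ne']
    obtain ⟨g, hg, -⟩ := hf.exists_boundedContinuous_eLpNorm_sub_le ENNReal.ofNat_ne_top hε3
    have hgm : AEStronglyMeasurable (⇑g) ν := g.continuous.aestronglyMeasurable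
    filter_upwards [ENNReal.tendsto_nhds_zero.mp (hmid g) (ε / 3) (pos_iff_ne_zero.mpr hε3)]
      with n hn
    have hfS : AEStronglyMeasurable (fun z => f (T^[q n] z)) ν :=
      hf.aestronglyMeasurable.comp_measurePreserving (hmpk (q n))
    have hgS : AEStronglyMeasurable (fun z => g (T^[q n] z)) ν :=
      (g.continuous.comp (hScont (q n))).aestronglyMeasurable
    calc eLpNorm (fun z => f (T^[q n] z) - f z) 2 ν
        ≤ eLpNorm (fun z => f (T^[q n] z) - g (T^[q n] z)) 2 ν
          + eLpNorm (fun z => g (T^[q n] z) - f z) 2 ν := by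
          have hsplit : (fun z => f (T^[q n] z) - f z)
              = fun z => (f (T^[q n] z) - g (T^[q n] z)) + (g (T^[q n] z) - f z) := by
            funext z; ring
          rw [hsplit]
          exact eLpNorm_add_le (hfS.sub hgS) (hgS.sub hf.aestronglyMeasurable) one_le_two
      _ ≤ eLpNorm (fun z => f (T^[q n] z) - g (T^[q n] z)) 2 ν
          + (eLpNorm (fun z => g (T^[q n] z) - g z) 2 ν
            + eLpNorm (fun z => g z - f z) 2 ν) := by
          have hsplit2 : (fun z => g (T^[q n] z) - f z)
              = fun z => (g (T^[q n] z) - g z) + (g z - f z) := by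
            funext z; ring
          refine add_le_add le_rfl ?_
          rw [hsplit2]
          exact eLpNorm_add_le (hgS.sub hgm) (hgm.sub hf.aestronglyMeasurable) one_le_two
      _ ≤ ε / 3 + (ε / 3 + ε / 3) := by
          have e1 : eLpNorm (fun z => f (T^[q n] z) - g (T^[q n] z)) 2 ν
              = eLpNorm (f - ⇑g) 2 ν := by
            have h1 : (fun z => f (T^[q n] z) - g (T^[q n] z)) = (f - ⇑g) ∘ (T^[q n]) := rfl
            rw [h1, eLpNorm_comp_measurePreserving (hf.aestronglyMeasurable.sub hgm) (hmpk (q n))]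
          have e2 : eLpNorm (fun z => g z - f z) 2 ν = eLpNorm (f - ⇑g) 2 ν := by
            have h1 : (fun z => g z - f z) = (⇑g - f) := rfl
            rw [h1, eLpNorm_sub_comm]
          exact add_le_add (by rw [e1]; exact hg) (add_le_add hn (by rw [e2]; exact hg))
      _ = ε := by rw [← add_assoc]; exact ENNReal.add_thirds ε
  -- convert to the stated integral
  have hI : ∀ n, (∫ z, ‖f (T^[q n] z) - f z‖ ^ 2 ∂ν)
      = ((eLpNorm (fun z => f (T^[q n] z) - f z) 2 ν).toReal) ^ 2 := by
    intro n
    have h1 := (hFmem n).eLpNorm_eq_integral_rpow_norm two_ne_zero ENNReal.ofNat_ne_top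
    simp only [ENNReal.toReal_ofNat] at h1
    have hnn : 0 ≤ ∫ a, ‖f (T^[q n] a) - f a‖ ^ (2 : ℝ) ∂ν :=
      integral_nonneg fun a => Real.rpow_nonneg (norm_nonneg _) _
    have h2 : (∫ z, ‖f (T^[q n] z) - f z‖ ^ 2 ∂ν)
        = ∫ a, ‖f (T^[q n] a) - f a‖ ^ (2 : ℝ) ∂ν := by
      refine integral_congr_ae (Eventually.of_forall fun z => ?_)
      exact (Real.rpow_two _).symm
    rw [h2, h1, ENNReal.toReal_ofReal (Real.rpow_nonneg hnn _)]
    rw [← Real.rpow_natCast ((∫ a, ‖f (T^[q n] a) - f a‖ ^ (2 : ℝ) ∂ν) ^ (2 : ℝ)⁻¹) 2,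
      ← Real.rpow_mul hnn]
    norm_num
  have htr : Tendsto (fun n => (eLpNorm (fun z => f (T^[q n] z) - f z) 2 ν).toReal) atTop
      (nhds 0) := by
    have := (ENNReal.tendsto_toReal (by simp : (0 : ℝ≥0∞) ≠ ∞)).comp hmain
    simpa [Function.comp_def] using this
  have hfin : Tendsto (fun n => ((eLpNorm (fun z => f (T^[q n] z) - f z) 2 ν).toReal) ^ 2)
      atTop (nhds 0) := by
    simpa using htr.pow 2
  simpa only [hI] using hfin
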